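/- Let B₁ ∈ ℝ^{m×k}, B₂ ∈ ℝ^{m×m} invertible, and A = [[I_k, 0], [B₁, B₂]]. If there exist constants C₁, C₂, C₃ with ‖B₁‖₂ ≤ C₁, ‖B₂‖₂ ≤ C₂, ‖B₂⁻¹‖₂ ≤ C₃, then κ₂(A) ≤ (1 + (C₁ + C₂)²)^{1/2} · (1 + C₃²(1 + C₁)²)^{1/2}, where κ₂(A) = ‖A‖₂‖A⁻¹‖₂. -/

import Mathlib

noncomputable def l2OpNorm {m n : Type*} [Fintype m] [Fintype n] [DecidableEq n]
    (A : Matrix m n ℝ) : ℝ :=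
  ‖LinearMap.toContinuousLinearMap (Matrix.toEuclideanLin A)‖

open Matrix in
lemma l2OpNorm_nonneg {m n : Type*} [Fintype m] [Fintype n] [DecidableEq n]
    (A : Matrix m n ℝ) : 0 ≤ l2OpNorm A := norm_nonneg _

open Matrix in
lemma l2OpNorm_mulVec_le {m n : Type*} [Fintype m] [Fintype n] [DecidableEq n]
    (A : Matrix m n ℝ) (x : n → ℝ) :
    ‖(WithLp.equiv 2 (m → ℝ)).symm (A *ᵥ x)‖ ≤
      l2OpNorm A * ‖(WithLp.equiv 2 (n → ℝ)).symm x‖ := by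
  have := (LinearMap.toContinuousLinearMap (Matrix.toEuclideanLin A)).le_opNorm
    ((WithLp.equiv 2 (n → ℝ)).symm x)
  simpa [l2OpNorm, Matrix.toEuclideanLin_toLp, Matrix.toLin'_apply] using this

open Matrix in
lemma l2OpNorm_mul_le {l m n : Type*} [Fintype l] [Fintype m] [Fintype n]
    [DecidableEq m] [DecidableEq n]
    (A : Matrix l m ℝ) (B : Matrix m n ℝ) :
    l2OpNorm (A * B) ≤ l2OpNorm A * l2OpNorm B := by
  apply ContinuousLinearMap.opNorm_le_bound _
    (mul_nonneg (l2OpNorm_nonneg A) (l2OpNorm_nonneg B))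
  intro x
  have h1 : (LinearMap.toContinuousLinearMap (Matrix.toEuclideanLin (A * B))) x =
      (WithLp.equiv 2 (l → ℝ)).symm ((A * B) *ᵥ (WithLp.equiv 2 (n → ℝ) x)) := by
    simp [Matrix.toEuclideanLin_apply]
  rw [h1, ← Matrix.mulVec_mulVec]
  calc ‖(WithLp.equiv 2 (l → ℝ)).symm (A *ᵥ (B *ᵥ (WithLp.equiv 2 (n → ℝ) x)))‖
      ≤ l2OpNorm A * ‖(WithLp.equiv 2 (m → ℝ)).symm (B *ᵥ (WithLp.equiv 2 (n → ℝ) x))‖ :=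
        l2OpNorm_mulVec_le A _
    _ ≤ l2OpNorm A * (l2OpNorm B * ‖x‖) := by
        apply mul_le_mul_of_nonneg_left _ (l2OpNorm_nonneg A)
        have := l2OpNorm_mulVec_le B (WithLp.equiv 2 (n → ℝ) x)
        simpa using this
    _ = l2OpNorm A * l2OpNorm B * ‖x‖ := by ring

lemma l2OpNorm_neg {m n : Type*} [Fintype m] [Fintype n] [DecidableEq n]
    (A : Matrix m n ℝ) : l2OpNorm (-A) = l2OpNorm A := by
  unfold l2OpNorm
  rw [map_neg, map_neg, norm_neg]

open Matrix in
lemma l2OpNorm_one_le {n : Type*} [Fintype n] [DecidableEq n] :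
    l2OpNorm (1 : Matrix n n ℝ) ≤ 1 := by
  apply ContinuousLinearMap.opNorm_le_bound _ zero_le_one
  intro x
  have h1 : (LinearMap.toContinuousLinearMap (Matrix.toEuclideanLin (1 : Matrix n n ℝ))) x =
      (WithLp.equiv 2 (n → ℝ)).symm ((1 : Matrix n n ℝ) *ᵥ (WithLp.equiv 2 (n → ℝ) x)) := by
    simp [Matrix.toEuclideanLin_apply]
  rw [h1, Matrix.one_mulVec]
  simp

lemma euclid_sum_sq {k m : ℕ} (w₁ : Fin k → ℝ) (w₂ : Fin m → ℝ) :
    ‖(WithLp.equiv 2 (Fin k ⊕ Fin m → ℝ)).symm (Sum.elim w₁ w₂)‖ ^ 2 =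
    ‖(WithLp.equiv 2 (Fin k → ℝ)).symm w₁‖ ^ 2 + ‖(WithLp.equiv 2 (Fin m → ℝ)).symm w₂‖ ^ 2 := by
  simp only [EuclideanSpace.norm_eq, WithLp.equiv_symm_apply, PiLp.toLp_apply]
  rw [Real.sq_sqrt (by positivity), Real.sq_sqrt (by positivity), Real.sq_sqrt (by positivity),
    Fintype.sum_sum_type]
  simp

open Matrix in
lemma l2OpNorm_fromBlocks_le {k m : ℕ} (P : Matrix (Fin k) (Fin k) ℝ)
    (R : Matrix (Fin m) (Fin k) ℝ) (S : Matrix (Fin m) (Fin m) ℝ) (a b : ℝ)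
    (ha : 0 ≤ a) (hb : 0 ≤ b) (hP : l2OpNorm P ≤ a) (hRS : l2OpNorm R + l2OpNorm S ≤ b) :
    l2OpNorm (Matrix.fromBlocks P 0 R S) ≤ Real.sqrt (a ^ 2 + b ^ 2) := by
  apply ContinuousLinearMap.opNorm_le_bound _ (Real.sqrt_nonneg _)
  intro x
  set v : (Fin k ⊕ Fin m) → ℝ := WithLp.equiv 2 _ x with hv
  set v₁ : Fin k → ℝ := v ∘ Sum.inl with hv₁
  set v₂ : Fin m → ℝ := v ∘ Sum.inr with hv₂
  set x₁ : EuclideanSpace ℝ (Fin k) := (WithLp.equiv 2 (Fin k → ℝ)).symm v₁ with hx₁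
  set x₂ : EuclideanSpace ℝ (Fin m) := (WithLp.equiv 2 (Fin m → ℝ)).symm v₂ with hx₂
  have hve : Sum.elim v₁ v₂ = v := Sum.elim_comp_inl_inr v
  have hxsq : ‖x‖ ^ 2 = ‖x₁‖ ^ 2 + ‖x₂‖ ^ 2 := by
    have := euclid_sum_sq v₁ v₂
    rw [hve] at this
    rw [hx₁, hx₂]
    simpa [hv] using this.symm |>.symm
  have hx1le : ‖x₁‖ ≤ ‖x‖ := by
    have h1 : ‖x₁‖ ^ 2 ≤ ‖x‖ ^ 2 := by rw [hxsq]; exact le_add_of_nonneg_right (by positivity)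
    calc ‖x₁‖ = Real.sqrt (‖x₁‖ ^ 2) := (Real.sqrt_sq (norm_nonneg _)).symm
      _ ≤ Real.sqrt (‖x‖ ^ 2) := Real.sqrt_le_sqrt h1
      _ = ‖x‖ := Real.sqrt_sq (norm_nonneg _)
  have hx2le : ‖x₂‖ ≤ ‖x‖ := by
    have h1 : ‖x₂‖ ^ 2 ≤ ‖x‖ ^ 2 := by rw [hxsq]; exact le_add_of_nonneg_left (by positivity)
    calc ‖x₂‖ = Real.sqrt (‖x₂‖ ^ 2) := (Real.sqrt_sq (norm_nonneg _)).symm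
      _ ≤ Real.sqrt (‖x‖ ^ 2) := Real.sqrt_le_sqrt h1
      _ = ‖x‖ := Real.sqrt_sq (norm_nonneg _)
  have happ : (LinearMap.toContinuousLinearMap
        (Matrix.toEuclideanLin (Matrix.fromBlocks P 0 R S))) x =
      (WithLp.equiv 2 (Fin k ⊕ Fin m → ℝ)).symm
        (Sum.elim (P *ᵥ v₁) (R *ᵥ v₁ + S *ᵥ v₂)) := by
    have : (Matrix.fromBlocks P 0 R S) *ᵥ v =
        Sum.elim (P *ᵥ v₁ + (0 : Matrix (Fin k) (Fin m) ℝ) *ᵥ v₂) (R *ᵥ v₁ + S *ᵥ v₂) := by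
      rw [← hve, Matrix.fromBlocks_mulVec]
      simp
    simp only [Matrix.toEuclideanLin_apply, LinearMap.coe_toContinuousLinearMap', ← hv, this,
      Matrix.zero_mulVec, add_zero]
    rw [Matrix.zero_mulVec, add_zero] at this
    exact congrArg (WithLp.toLp 2) this
  have htop : ‖(WithLp.equiv 2 (Fin k → ℝ)).symm (P *ᵥ v₁)‖ ≤ a * ‖x‖ := by
    calc ‖(WithLp.equiv 2 (Fin k → ℝ)).symm (P *ᵥ v₁)‖ ≤ l2OpNorm P * ‖x₁‖ :=
          l2OpNorm_mulVec_le P v₁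
      _ ≤ a * ‖x‖ := mul_le_mul hP hx1le (norm_nonneg _) ha
  have hbot : ‖(WithLp.equiv 2 (Fin m → ℝ)).symm (R *ᵥ v₁ + S *ᵥ v₂)‖ ≤ b * ‖x‖ := by
    have hsplit : (WithLp.equiv 2 (Fin m → ℝ)).symm (R *ᵥ v₁ + S *ᵥ v₂) =
        (WithLp.equiv 2 (Fin m → ℝ)).symm (R *ᵥ v₁) +
          (WithLp.equiv 2 (Fin m → ℝ)).symm (S *ᵥ v₂) := rfl
    calc ‖(WithLp.equiv 2 (Fin m → ℝ)).symm (R *ᵥ v₁ + S *ᵥ v₂)‖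
        ≤ ‖(WithLp.equiv 2 (Fin m → ℝ)).symm (R *ᵥ v₁)‖ +
            ‖(WithLp.equiv 2 (Fin m → ℝ)).symm (S *ᵥ v₂)‖ := by
          rw [hsplit]; exact norm_add_le _ _
      _ ≤ l2OpNorm R * ‖x₁‖ + l2OpNorm S * ‖x₂‖ :=
          add_le_add (l2OpNorm_mulVec_le R v₁) (l2OpNorm_mulVec_le S v₂)
      _ ≤ l2OpNorm R * ‖x‖ + l2OpNorm S * ‖x‖ :=
          add_le_add (mul_le_mul_of_nonneg_left hx1le (l2OpNorm_nonneg R))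
            (mul_le_mul_of_nonneg_left hx2le (l2OpNorm_nonneg S))
      _ = (l2OpNorm R + l2OpNorm S) * ‖x‖ := by ring
      _ ≤ b * ‖x‖ := mul_le_mul_of_nonneg_right hRS (norm_nonneg _)
  have hsq : ‖(LinearMap.toContinuousLinearMap
        (Matrix.toEuclideanLin (Matrix.fromBlocks P 0 R S))) x‖ ^ 2 ≤
      (a ^ 2 + b ^ 2) * ‖x‖ ^ 2 := by
    rw [happ, euclid_sum_sq]
    have h1 : ‖(WithLp.equiv 2 (Fin k → ℝ)).symm (P *ᵥ v₁)‖ ^ 2 ≤ (a * ‖x‖) ^ 2 :=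
      pow_le_pow_left₀ (norm_nonneg _) htop 2
    have h2 : ‖(WithLp.equiv 2 (Fin m → ℝ)).symm (R *ᵥ v₁ + S *ᵥ v₂)‖ ^ 2 ≤ (b * ‖x‖) ^ 2 :=
      pow_le_pow_left₀ (norm_nonneg _) hbot 2
    nlinarith
  calc ‖(LinearMap.toContinuousLinearMap
        (Matrix.toEuclideanLin (Matrix.fromBlocks P 0 R S))) x‖
      = Real.sqrt (‖(LinearMap.toContinuousLinearMap
          (Matrix.toEuclideanLin (Matrix.fromBlocks P 0 R S))) x‖ ^ 2) :=
        (Real.sqrt_sq (norm_nonneg _)).symm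
    _ ≤ Real.sqrt ((a ^ 2 + b ^ 2) * ‖x‖ ^ 2) := Real.sqrt_le_sqrt hsq
    _ = Real.sqrt (a ^ 2 + b ^ 2) * ‖x‖ := by
        rw [Real.sqrt_mul (by positivity), Real.sqrt_sq (norm_nonneg _)]

theorem stmt4 (k m : ℕ) (B₁ : Matrix (Fin m) (Fin k) ℝ) (B₂ : Matrix (Fin m) (Fin m) ℝ)
    (hB₂ : IsUnit B₂) (C₁ C₂ C₃ : ℝ)
    (h1 : l2OpNorm B₁ ≤ C₁) (h2 : l2OpNorm B₂ ≤ C₂) (h3 : l2OpNorm B₂⁻¹ ≤ C₃) :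
    l2OpNorm (Matrix.fromBlocks (1 : Matrix (Fin k) (Fin k) ℝ) 0 B₁ B₂) *
      l2OpNorm (Matrix.fromBlocks (1 : Matrix (Fin k) (Fin k) ℝ) 0 B₁ B₂)⁻¹ ≤
      Real.sqrt (1 + (C₁ + C₂) ^ 2) * Real.sqrt (1 + C₃ ^ 2 * (1 + C₁) ^ 2) := by
  have hC₁ : 0 ≤ C₁ := (l2OpNorm_nonneg B₁).trans h1
  have hC₂ : 0 ≤ C₂ := (l2OpNorm_nonneg B₂).trans h2
  have hC₃ : 0 ≤ C₃ := (l2OpNorm_nonneg B₂⁻¹).trans h3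
  have hinv : (Matrix.fromBlocks (1 : Matrix (Fin k) (Fin k) ℝ) 0 B₁ B₂)⁻¹ =
      Matrix.fromBlocks 1 0 (-(B₂⁻¹ * B₁)) B₂⁻¹ := by
    rw [Matrix.inv_fromBlocks_zero₁₂_of_isUnit_iff _ _ _ (iff_of_true isUnit_one hB₂),
      Matrix.inv_eq_left_inv (Matrix.one_mul (1 : Matrix (Fin k) (Fin k) ℝ)), Matrix.mul_one]
  have hA : l2OpNorm (Matrix.fromBlocks (1 : Matrix (Fin k) (Fin k) ℝ) 0 B₁ B₂) ≤
      Real.sqrt (1 + (C₁ + C₂) ^ 2) := by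
    have := l2OpNorm_fromBlocks_le 1 B₁ B₂ 1 (C₁ + C₂) zero_le_one (by positivity)
      l2OpNorm_one_le (add_le_add h1 h2)
    simpa using this
  have hAinv : l2OpNorm (Matrix.fromBlocks (1 : Matrix (Fin k) (Fin k) ℝ) 0 B₁ B₂)⁻¹ ≤
      Real.sqrt (1 + C₃ ^ 2 * (1 + C₁) ^ 2) := by
    rw [hinv]
    have hR : l2OpNorm (-(B₂⁻¹ * B₁)) + l2OpNorm B₂⁻¹ ≤ C₃ * (1 + C₁) := by
      rw [l2OpNorm_neg]
      have := (l2OpNorm_mul_le B₂⁻¹ B₁).trans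
        (mul_le_mul h3 h1 (l2OpNorm_nonneg B₁) hC₃)
      nlinarith [l2OpNorm_nonneg (B₂⁻¹ * B₁)]
    have := l2OpNorm_fromBlocks_le 1 (-(B₂⁻¹ * B₁)) B₂⁻¹ 1 (C₃ * (1 + C₁)) zero_le_one
      (by positivity) l2OpNorm_one_le hR
    calc l2OpNorm (Matrix.fromBlocks 1 0 (-(B₂⁻¹ * B₁)) B₂⁻¹) ≤
        Real.sqrt (1 ^ 2 + (C₃ * (1 + C₁)) ^ 2) := this
      _ = Real.sqrt (1 + C₃ ^ 2 * (1 + C₁) ^ 2) := by rw [one_pow, mul_pow]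
  exact mul_le_mul hA hAinv (l2OpNorm_nonneg _) (Real.sqrt_nonneg _)
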